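/- Let D be the distribution on ℝ⁹ (coordinates t, x₁, y₁, x₂, y₂, x₃, y₃, x₄, y₄) spanned by Z₂ = ∂/∂x₄, Z₃ = ∂/∂y₄, and Z₁ = x₃∂/∂t + x₂x₃∂/∂x₁ + y₂x₃∂/∂y₁ + ∂/∂x₂ + y₃∂/∂y₂ + (b + x₄)∂/∂x₃ + (c + y₄)∂/∂y₃ with (b,c) ≠ (0,0). Then the big growth vector of D at the origin is [3, 5, 7, 9]: i.e. the flag D = D³ ⊂ D² ⊂ D¹ ⊂ D⁰ of consecutive Lie squares (Dʲ⁻¹ = Dʲ + [Dʲ, Dʲ]) has fiber dimensions 3, 5, 7, 9 at 0. -/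
import Mathlib


/-- ℝ⁹ with coordinates t, x₁, y₁, x₂, y₂, x₃, y₃, x₄, y₄ (indices 0,…,8). -/
abbrev E9 := Fin 9 → ℝ

/-- Lie bracket of vector fields on ℝ⁹: `[X,Y](v) = DY(v)(X(v)) - DX(v)(Y(v))`. -/
noncomputable def lieB (X Y : E9 → E9) : E9 → E9 :=
  fun v => fderiv ℝ Y v (X v) - fderiv ℝ X v (Y v)

/-- The EKR (1.2.1) generator
`Z₁ = x₃∂_t + x₂x₃∂_{x₁} + y₂x₃∂_{y₁} + ∂_{x₂} + y₃∂_{y₂} + (b+x₄)∂_{x₃} + (c+y₄)∂_{y₃}`. -/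
noncomputable def Zone (b c : ℝ) : E9 → E9 := fun v =>
  ![v 5, v 3 * v 5, v 4 * v 5, 1, v 6, b + v 7, c + v 8, 0, 0]

/-- The generators of the distribution: Z₁, Z₂ = ∂_{x₄}, Z₃ = ∂_{y₄}. -/
noncomputable def gens (b c : ℝ) : Set (E9 → E9) :=
  {Zone b c, fun _ => Pi.single 7 1, fun _ => Pi.single 8 1}

/-- Generating vector fields of the members of the big flag:
`BigSet b c 0` generates D = D³ and `BigSet b c (k+1)` generates the Lie square
of the distribution generated by `BigSet b c k`. -/
noncomputable def BigSet (b c : ℝ) : ℕ → Set (E9 → E9)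
  | 0 => gens b c
  | k + 1 => BigSet b c k ∪
      {W | ∃ X ∈ BigSet b c k, ∃ Y ∈ BigSet b c k, W = lieB X Y}

/-- The fiber at 0 of the `k`-th member of the big flag. -/
noncomputable def bigFiber (b c : ℝ) (k : ℕ) : Submodule ℝ E9 :=
  Submodule.span ℝ ((fun W : E9 → E9 => W 0) '' BigSet b c k)

set_option linter.unusedVariables false

@[simp] lemma vec3_0 {α : Type*} (a0 a1 a2 : α) : ![a0,a1,a2] (0 : Fin 3) = a0 := rfl
@[simp] lemma vec3_1 {α : Type*} (a0 a1 a2 : α) : ![a0,a1,a2] (1 : Fin 3) = a1 := rfl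
@[simp] lemma vec3_2 {α : Type*} (a0 a1 a2 : α) : ![a0,a1,a2] (2 : Fin 3) = a2 := rfl
@[simp] lemma vec5_0 {α : Type*} (a0 a1 a2 a3 a4 : α) : ![a0,a1,a2,a3,a4] (0 : Fin 5) = a0 := rfl
@[simp] lemma vec5_1 {α : Type*} (a0 a1 a2 a3 a4 : α) : ![a0,a1,a2,a3,a4] (1 : Fin 5) = a1 := rfl
@[simp] lemma vec5_2 {α : Type*} (a0 a1 a2 a3 a4 : α) : ![a0,a1,a2,a3,a4] (2 : Fin 5) = a2 := rfl
@[simp] lemma vec5_3 {α : Type*} (a0 a1 a2 a3 a4 : α) : ![a0,a1,a2,a3,a4] (3 : Fin 5) = a3 := rfl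
@[simp] lemma vec5_4 {α : Type*} (a0 a1 a2 a3 a4 : α) : ![a0,a1,a2,a3,a4] (4 : Fin 5) = a4 := rfl
@[simp] lemma vec7_0 {α : Type*} (a0 a1 a2 a3 a4 a5 a6 : α) : ![a0,a1,a2,a3,a4,a5,a6] (0 : Fin 7) = a0 := rfl
@[simp] lemma vec7_1 {α : Type*} (a0 a1 a2 a3 a4 a5 a6 : α) : ![a0,a1,a2,a3,a4,a5,a6] (1 : Fin 7) = a1 := rfl
@[simp] lemma vec7_2 {α : Type*} (a0 a1 a2 a3 a4 a5 a6 : α) : ![a0,a1,a2,a3,a4,a5,a6] (2 : Fin 7) = a2 := rfl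
@[simp] lemma vec7_3 {α : Type*} (a0 a1 a2 a3 a4 a5 a6 : α) : ![a0,a1,a2,a3,a4,a5,a6] (3 : Fin 7) = a3 := rfl
@[simp] lemma vec7_4 {α : Type*} (a0 a1 a2 a3 a4 a5 a6 : α) : ![a0,a1,a2,a3,a4,a5,a6] (4 : Fin 7) = a4 := rfl
@[simp] lemma vec7_5 {α : Type*} (a0 a1 a2 a3 a4 a5 a6 : α) : ![a0,a1,a2,a3,a4,a5,a6] (5 : Fin 7) = a5 := rfl
@[simp] lemma vec7_6 {α : Type*} (a0 a1 a2 a3 a4 a5 a6 : α) : ![a0,a1,a2,a3,a4,a5,a6] (6 : Fin 7) = a6 := rfl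
@[simp] lemma vec9_0 {α : Type*} (a0 a1 a2 a3 a4 a5 a6 a7 a8 : α) : ![a0,a1,a2,a3,a4,a5,a6,a7,a8] (0 : Fin 9) = a0 := rfl
@[simp] lemma vec9_1 {α : Type*} (a0 a1 a2 a3 a4 a5 a6 a7 a8 : α) : ![a0,a1,a2,a3,a4,a5,a6,a7,a8] (1 : Fin 9) = a1 := rfl
@[simp] lemma vec9_2 {α : Type*} (a0 a1 a2 a3 a4 a5 a6 a7 a8 : α) : ![a0,a1,a2,a3,a4,a5,a6,a7,a8] (2 : Fin 9) = a2 := rfl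
@[simp] lemma vec9_3 {α : Type*} (a0 a1 a2 a3 a4 a5 a6 a7 a8 : α) : ![a0,a1,a2,a3,a4,a5,a6,a7,a8] (3 : Fin 9) = a3 := rfl
@[simp] lemma vec9_4 {α : Type*} (a0 a1 a2 a3 a4 a5 a6 a7 a8 : α) : ![a0,a1,a2,a3,a4,a5,a6,a7,a8] (4 : Fin 9) = a4 := rfl
@[simp] lemma vec9_5 {α : Type*} (a0 a1 a2 a3 a4 a5 a6 a7 a8 : α) : ![a0,a1,a2,a3,a4,a5,a6,a7,a8] (5 : Fin 9) = a5 := rfl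
@[simp] lemma vec9_6 {α : Type*} (a0 a1 a2 a3 a4 a5 a6 a7 a8 : α) : ![a0,a1,a2,a3,a4,a5,a6,a7,a8] (6 : Fin 9) = a6 := rfl
@[simp] lemma vec9_7 {α : Type*} (a0 a1 a2 a3 a4 a5 a6 a7 a8 : α) : ![a0,a1,a2,a3,a4,a5,a6,a7,a8] (7 : Fin 9) = a7 := rfl
@[simp] lemma vec9_8 {α : Type*} (a0 a1 a2 a3 a4 a5 a6 a7 a8 : α) : ![a0,a1,a2,a3,a4,a5,a6,a7,a8] (8 : Fin 9) = a8 := rfl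


noncomputable def e (i : Fin 9) : E9 := Pi.single i 1

noncomputable def cf (a : E9) : E9 → E9 := fun _ => a

def D1lin (v : E9) : E9 →ₗ[ℝ] E9 where
  toFun w := ![w 5, w 3 * v 5 + v 3 * w 5, w 4 * v 5 + v 4 * w 5, 0, w 6, w 7, w 8, 0, 0]
  map_add' x y := by funext i; fin_cases i <;> simp <;> ring
  map_smul' t x := by funext i; fin_cases i <;> simp <;> ring

noncomputable def D1 (v : E9) : E9 →L[ℝ] E9 := (D1lin v).toContinuousLinearMap

open ContinuousLinearMap in
lemma hasFDerivAt_Zone (b c : ℝ) (v : E9) : HasFDerivAt (Zone b c) (D1 v) v := by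
  apply hasFDerivAt_pi''
  intro i
  fin_cases i
  · exact (hasFDerivAt_apply 5 v).congr_fderiv (by ext w; simp [D1, D1lin])
  · exact ((hasFDerivAt_apply 3 v).mul (hasFDerivAt_apply 5 v)).congr_fderiv
      (by ext w; simp [D1, D1lin]; ring)
  · exact ((hasFDerivAt_apply 4 v).mul (hasFDerivAt_apply 5 v)).congr_fderiv
      (by ext w; simp [D1, D1lin]; ring)
  · exact (hasFDerivAt_const 1 v).congr_fderiv (by ext w; simp [D1, D1lin])
  · exact (hasFDerivAt_apply 6 v).congr_fderiv (by ext w; simp [D1, D1lin])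
  · exact ((hasFDerivAt_const b v).add (hasFDerivAt_apply 7 v)).congr_fderiv
      (by ext w; simp [D1, D1lin])
  · exact ((hasFDerivAt_const c v).add (hasFDerivAt_apply 8 v)).congr_fderiv
      (by ext w; simp [D1, D1lin])
  · exact (hasFDerivAt_const 0 v).congr_fderiv (by ext w; simp [D1, D1lin])
  · exact (hasFDerivAt_const 0 v).congr_fderiv (by ext w; simp [D1, D1lin])

lemma fderiv_Zone (b c : ℝ) (v : E9) : fderiv ℝ (Zone b c) v = D1 v :=
  (hasFDerivAt_Zone b c v).fderiv

noncomputable def Xf : E9 → E9 := fun v => ![1, v 3, v 4, 0, 0, 0, 0, 0, 0]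

def DXlin : E9 →ₗ[ℝ] E9 where
  toFun w := ![0, w 3, w 4, 0, 0, 0, 0, 0, 0]
  map_add' x y := by funext i; fin_cases i <;> simp
  map_smul' t x := by funext i; fin_cases i <;> simp

noncomputable def DX : E9 →L[ℝ] E9 := DXlin.toContinuousLinearMap

open ContinuousLinearMap in
lemma hasFDerivAt_Xf (v : E9) : HasFDerivAt Xf DX v := by
  apply hasFDerivAt_pi''
  intro i
  fin_cases i
  · exact (hasFDerivAt_const 1 v).congr_fderiv (by ext w; simp [DX, DXlin])
  · exact (hasFDerivAt_apply 3 v).congr_fderiv (by ext w; simp [DX, DXlin])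
  · exact (hasFDerivAt_apply 4 v).congr_fderiv (by ext w; simp [DX, DXlin])
  all_goals exact (hasFDerivAt_const 0 v).congr_fderiv (by ext w; simp [DX, DXlin])

lemma fderiv_Xf (v : E9) : fderiv ℝ Xf v = DX := (hasFDerivAt_Xf v).fderiv

-- bracket identities
lemma fderiv_cf (a : E9) (v : E9) : fderiv ℝ (cf a) v = 0 := fderiv_const_apply a

lemma lieB_self (X : E9 → E9) : lieB X X = cf 0 := funext fun v => sub_self _

lemma lieB_const_const (a a' : E9) : lieB (cf a) (cf a') = cf 0 := by
  funext v
  simp [lieB, cf, fderiv_cf]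

lemma lieB_const_Zone (b c : ℝ) (a : E9) :
    lieB (cf a) (Zone b c) = fun v => D1 v a := by
  funext v
  simp [lieB, cf, fderiv_cf, fderiv_Zone]

lemma lieB_Zone_const (b c : ℝ) (a : E9) :
    lieB (Zone b c) (cf a) = fun v => -(D1 v a) := by
  funext v
  simp [lieB, cf, fderiv_cf, fderiv_Zone]

lemma D1_single7 (v : E9) : D1 v (Pi.single 7 1) = e 5 := by
  funext i; fin_cases i <;> simp [D1, D1lin, e, Pi.single_apply]

lemma D1_single8 (v : E9) : D1 v (Pi.single 8 1) = e 6 := by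
  funext i; fin_cases i <;> simp [D1, D1lin, e, Pi.single_apply]

lemma D1_e5 (v : E9) : D1 v (e 5) = Xf v := by
  funext i; fin_cases i <;> simp [D1, D1lin, e, Xf, Pi.single_apply]

lemma D1_e6 (v : E9) : D1 v (e 6) = e 4 := by
  funext i; fin_cases i <;> simp [D1, D1lin, e, Pi.single_apply]

lemma br_Z2_Z1 (b c : ℝ) : lieB (fun _ => Pi.single 7 1) (Zone b c) = cf (e 5) := by
  have := lieB_const_Zone b c (Pi.single 7 1)
  rw [show (fun _ : E9 => Pi.single 7 (1:ℝ)) = cf (Pi.single 7 1) from rfl, this]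
  funext v; exact D1_single7 v

lemma br_Z3_Z1 (b c : ℝ) : lieB (fun _ => Pi.single 8 1) (Zone b c) = cf (e 6) := by
  have := lieB_const_Zone b c (Pi.single 8 1)
  rw [show (fun _ : E9 => Pi.single 8 (1:ℝ)) = cf (Pi.single 8 1) from rfl, this]
  funext v; exact D1_single8 v

lemma br_e5_Z1 (b c : ℝ) : lieB (cf (e 5)) (Zone b c) = Xf := by
  rw [lieB_const_Zone]; funext v; exact D1_e5 v

lemma br_e6_Z1 (b c : ℝ) : lieB (cf (e 6)) (Zone b c) = cf (e 4) := by
  rw [lieB_const_Zone]; funext v; exact D1_e6 v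

-- values at 0
lemma Zone0 (b c : ℝ) : Zone b c 0 = ![0, 0, 0, 1, 0, b, c, 0, 0] := by
  funext i; fin_cases i <;> simp [Zone]

lemma Xf0 : Xf 0 = e 0 := by
  funext i; fin_cases i <;> simp [Xf, e, Pi.single_apply]

lemma val_e1 (b c : ℝ) : lieB (Zone b c) Xf 0 = e 1 := by
  simp only [lieB, fderiv_Zone, fderiv_Xf]
  funext i
  fin_cases i <;>
    simp [DX, DXlin, D1, D1lin, Zone, Xf, e, Pi.single_apply]

lemma val_e2 : lieB (cf (e 4)) Xf 0 = e 2 := by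
  simp only [lieB, fderiv_Xf, cf, fderiv_cf]
  funext i
  fin_cases i <;> simp [DX, DXlin, e, Pi.single_apply]

lemma Zone0_comb (b c : ℝ) : Zone b c 0 = e 3 + b • e 5 + c • e 6 := by
  funext i; fin_cases i <;> simp [Zone, e, Pi.single_apply]

open Submodule Set

lemma BigSet_mono (b c : ℝ) (k : ℕ) : BigSet b c k ⊆ BigSet b c (k + 1) :=
  Set.subset_union_left

lemma BigSet_le {b c : ℝ} {k l : ℕ} (h : k ≤ l) : BigSet b c k ⊆ BigSet b c l := by
  induction l with
  | zero => simpa [Nat.le_zero.1 h]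
  | succ n ih =>
    rcases Nat.lt_or_ge k (n+1) with h' | h'
    · exact (ih (Nat.lt_succ_iff.1 h')).trans (BigSet_mono b c n)
    · have : k = n + 1 := le_antisymm h h'
      simp [this]

lemma brmem {b c : ℝ} {k : ℕ} {X Y : E9 → E9} (hX : X ∈ BigSet b c k)
    (hY : Y ∈ BigSet b c k) : lieB X Y ∈ BigSet b c (k + 1) :=
  Or.inr ⟨X, hX, Y, hY, rfl⟩

lemma memZ1 (b c : ℝ) (k : ℕ) : Zone b c ∈ BigSet b c k :=
  BigSet_le (Nat.zero_le k) (Set.mem_insert _ _)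

lemma memZ2 (b c : ℝ) (k : ℕ) : (fun _ => Pi.single 7 1 : E9 → E9) ∈ BigSet b c k :=
  BigSet_le (Nat.zero_le k) (by right; left; rfl)

lemma memZ3 (b c : ℝ) (k : ℕ) : (fun _ => Pi.single 8 1 : E9 → E9) ∈ BigSet b c k :=
  BigSet_le (Nat.zero_le k) (by right; right; rfl)

lemma memE5 (b c : ℝ) {k : ℕ} (hk : 1 ≤ k) : cf (e 5) ∈ BigSet b c k :=
  BigSet_le hk (br_Z2_Z1 b c ▸ brmem (memZ2 b c 0) (memZ1 b c 0))

lemma memE6 (b c : ℝ) {k : ℕ} (hk : 1 ≤ k) : cf (e 6) ∈ BigSet b c k :=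
  BigSet_le hk (br_Z3_Z1 b c ▸ brmem (memZ3 b c 0) (memZ1 b c 0))

lemma memXf (b c : ℝ) {k : ℕ} (hk : 2 ≤ k) : Xf ∈ BigSet b c k :=
  BigSet_le hk (br_e5_Z1 b c ▸ brmem (memE5 b c le_rfl) (memZ1 b c 1))

lemma memE4 (b c : ℝ) {k : ℕ} (hk : 2 ≤ k) : cf (e 4) ∈ BigSet b c k :=
  BigSet_le hk (br_e6_Z1 b c ▸ brmem (memE6 b c le_rfl) (memZ1 b c 1))

lemma memB1 (b c : ℝ) : lieB (Zone b c) Xf ∈ BigSet b c 3 :=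
  brmem (memZ1 b c 2) (memXf b c le_rfl)

lemma memB2 (b c : ℝ) : lieB (cf (e 4)) Xf ∈ BigSet b c 3 :=
  brmem (memE4 b c le_rfl) (memXf b c le_rfl)

lemma mem_fiber {b c : ℝ} {k : ℕ} {W : E9 → E9} (h : W ∈ BigSet b c k) :
    W 0 ∈ bigFiber b c k := subset_span ⟨W, h, rfl⟩

/-- The possible constant values of members of `BigSet b c 1` other than `Zone b c`. -/
noncomputable def A1 : Set E9 :=
  {0, e 5, -e 5, e 6, -e 6, Pi.single 7 1, Pi.single 8 1}

lemma br_Z1_Z2 (b c : ℝ) :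
    lieB (Zone b c) (fun _ => Pi.single 7 1) = cf (-e 5) := by
  have := lieB_Zone_const b c (Pi.single 7 1)
  rw [show (fun _ : E9 => Pi.single 7 (1:ℝ)) = cf (Pi.single 7 1) from rfl, this]
  funext v; rw [D1_single7]; rfl

lemma br_Z1_Z3 (b c : ℝ) :
    lieB (Zone b c) (fun _ => Pi.single 8 1) = cf (-e 6) := by
  have := lieB_Zone_const b c (Pi.single 8 1)
  rw [show (fun _ : E9 => Pi.single 8 (1:ℝ)) = cf (Pi.single 8 1) from rfl, this]
  funext v; rw [D1_single8]; rfl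

lemma shape1 (b c : ℝ) : ∀ W ∈ BigSet b c 1, W = Zone b c ∨ ∃ a ∈ A1, W = cf a := by
  intro W hW
  rcases hW with h | ⟨X, hX, Y, hY, rfl⟩
  · simp only [BigSet, gens, Set.mem_insert_iff, Set.mem_singleton_iff] at h
    rcases h with rfl | rfl | rfl
    · exact Or.inl rfl
    · exact Or.inr ⟨Pi.single 7 1, by simp [A1], rfl⟩
    · exact Or.inr ⟨Pi.single 8 1, by simp [A1], rfl⟩
  · simp only [BigSet, gens, Set.mem_insert_iff, Set.mem_singleton_iff] at hX hY
    rcases hX with rfl | rfl | rfl <;> rcases hY with rfl | rfl | rfl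
    · exact Or.inr ⟨0, by simp [A1], lieB_self _⟩
    · exact Or.inr ⟨-e 5, by simp [A1], br_Z1_Z2 b c⟩
    · exact Or.inr ⟨-e 6, by simp [A1], br_Z1_Z3 b c⟩
    · exact Or.inr ⟨e 5, by simp [A1], br_Z2_Z1 b c⟩
    · exact Or.inr ⟨0, by simp [A1], lieB_const_const _ _⟩
    · exact Or.inr ⟨0, by simp [A1], lieB_const_const _ _⟩
    · exact Or.inr ⟨e 6, by simp [A1], br_Z3_Z1 b c⟩
    · exact Or.inr ⟨0, by simp [A1], lieB_const_const _ _⟩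
    · exact Or.inr ⟨0, by simp [A1], lieB_const_const _ _⟩

noncomputable def fam0 (b c : ℝ) : Fin 3 → E9 := ![Zone b c 0, e 7, e 8]
noncomputable def fam1 : Fin 5 → E9 := ![e 3, e 5, e 6, e 7, e 8]
noncomputable def fam2 : Fin 7 → E9 := ![e 0, e 3, e 4, e 5, e 6, e 7, e 8]

lemma indep_single {n : ℕ} (g : Fin n → Fin 9) (hg : Function.Injective g) :
    LinearIndependent ℝ (fun i => e (g i)) := by
  have h2 : (fun i => e (g i)) = (⇑(Pi.basisFun ℝ (Fin 9)) ∘ g) := by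
    funext i; simp [e, Function.comp]
  rw [h2]
  exact (Pi.basisFun ℝ (Fin 9)).linearIndependent.comp g hg

noncomputable def pi3 : E9 →ₗ[ℝ] (Fin 3 → ℝ) :=
  LinearMap.pi ![LinearMap.proj 3, LinearMap.proj 7, LinearMap.proj 8]

lemma indep_fam0 (b c : ℝ) : LinearIndependent ℝ (fam0 b c) := by
  apply LinearIndependent.of_comp pi3
  have h : (⇑pi3 ∘ fam0 b c) = fun i : Fin 3 => (Pi.single i 1 : Fin 3 → ℝ) := by
    funext i j
    fin_cases i <;> fin_cases j <;>
      simp [pi3, fam0, e, Zone, Pi.single_apply, LinearMap.pi_apply, Function.comp]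
  rw [h]
  have h2 : (fun i : Fin 3 => (Pi.single i 1 : Fin 3 → ℝ)) = ⇑(Pi.basisFun ℝ (Fin 3)) := by
    funext i; simp
  rw [h2]
  exact (Pi.basisFun ℝ (Fin 3)).linearIndependent

lemma indep_fam1 : LinearIndependent ℝ fam1 := by
  have h : fam1 = fun i => e (![3, 5, 6, 7, 8] i) := by
    funext i; fin_cases i <;> rfl
  rw [h]
  exact indep_single _ (by decide)

lemma indep_fam2 : LinearIndependent ℝ fam2 := by
  have h : fam2 = fun i => e (![0, 3, 4, 5, 6, 7, 8] i) := by
    funext i; fin_cases i <;> rfl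
  rw [h]
  exact indep_single _ (by decide)

lemma e3_comb (b c : ℝ) : e 3 = Zone b c 0 - b • e 5 - c • e 6 := by
  rw [Zone0_comb]; module

lemma fiber0_eq (b c : ℝ) : bigFiber b c 0 = span ℝ (Set.range (fam0 b c)) := by
  apply le_antisymm
  · refine span_le.2 ?_
    rintro _ ⟨W, hW, rfl⟩
    simp only [BigSet, gens, Set.mem_insert_iff, Set.mem_singleton_iff] at hW
    rcases hW with rfl | rfl | rfl
    · exact subset_span ⟨0, rfl⟩
    · exact subset_span ⟨1, rfl⟩
    · exact subset_span ⟨2, rfl⟩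
  · refine span_le.2 ?_
    rintro _ ⟨i, rfl⟩
    fin_cases i
    · exact mem_fiber (memZ1 b c 0)
    · exact mem_fiber (memZ2 b c 0)
    · exact mem_fiber (memZ3 b c 0)

lemma fiber1_eq (b c : ℝ) : bigFiber b c 1 = span ℝ (Set.range fam1) := by
  apply le_antisymm
  · refine span_le.2 ?_
    rintro _ ⟨W, hW, rfl⟩
    rcases shape1 b c W hW with rfl | ⟨a, ha, rfl⟩
    · show Zone b c 0 ∈ _
      rw [Zone0_comb]
      exact add_mem (add_mem (subset_span ⟨0, rfl⟩)
        (smul_mem _ b (subset_span ⟨1, rfl⟩))) (smul_mem _ c (subset_span ⟨2, rfl⟩))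
    · simp only [A1, Set.mem_insert_iff, Set.mem_singleton_iff] at ha
      rcases ha with rfl | rfl | rfl | rfl | rfl | rfl | rfl
      · exact zero_mem _
      · exact subset_span ⟨1, rfl⟩
      · exact neg_mem (subset_span ⟨1, rfl⟩)
      · exact subset_span ⟨2, rfl⟩
      · exact neg_mem (subset_span ⟨2, rfl⟩)
      · exact subset_span ⟨3, rfl⟩
      · exact subset_span ⟨4, rfl⟩
  · refine span_le.2 ?_
    rintro _ ⟨i, rfl⟩
    fin_cases i
    · show e 3 ∈ bigFiber b c 1
      rw [e3_comb b c]
      exact sub_mem (sub_mem (mem_fiber (memZ1 b c 1))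
        (smul_mem _ b (mem_fiber (memE5 b c le_rfl))))
        (smul_mem _ c (mem_fiber (memE6 b c le_rfl)))
    · exact mem_fiber (memE5 b c le_rfl)
    · exact mem_fiber (memE6 b c le_rfl)
    · exact mem_fiber (memZ2 b c 1)
    · exact mem_fiber (memZ3 b c 1)

lemma Dmem (b c : ℝ) : ∀ a ∈ A1, D1 0 a ∈ span ℝ (Set.range fam2) := by
  intro a ha
  simp only [A1, Set.mem_insert_iff, Set.mem_singleton_iff] at ha
  rcases ha with rfl | rfl | rfl | rfl | rfl | rfl | rfl
  · rw [map_zero]; exact zero_mem _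
  · rw [D1_e5, Xf0]; exact subset_span ⟨0, rfl⟩
  · rw [map_neg, D1_e5, Xf0]; exact neg_mem (subset_span ⟨0, rfl⟩)
  · rw [D1_e6]; exact subset_span ⟨2, rfl⟩
  · rw [map_neg, D1_e6]; exact neg_mem (subset_span ⟨2, rfl⟩)
  · rw [D1_single7]; exact subset_span ⟨3, rfl⟩
  · rw [D1_single8]; exact subset_span ⟨4, rfl⟩

lemma fiber2_eq (b c : ℝ) : bigFiber b c 2 = span ℝ (Set.range fam2) := by
  apply le_antisymm
  · refine span_le.2 ?_
    rintro _ ⟨W, hW, rfl⟩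
    have hz : Zone b c 0 ∈ span ℝ (Set.range fam2) := by
      rw [Zone0_comb]
      exact add_mem (add_mem (subset_span ⟨1, rfl⟩)
        (smul_mem _ b (subset_span ⟨3, rfl⟩))) (smul_mem _ c (subset_span ⟨4, rfl⟩))
    have hconst : ∀ a ∈ A1, a ∈ span ℝ (Set.range fam2) := by
      intro a ha
      simp only [A1, Set.mem_insert_iff, Set.mem_singleton_iff] at ha
      rcases ha with rfl | rfl | rfl | rfl | rfl | rfl | rfl
      · exact zero_mem _
      · exact subset_span ⟨3, rfl⟩
      · exact neg_mem (subset_span ⟨3, rfl⟩)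
      · exact subset_span ⟨4, rfl⟩
      · exact neg_mem (subset_span ⟨4, rfl⟩)
      · exact subset_span ⟨5, rfl⟩
      · exact subset_span ⟨6, rfl⟩
    rcases hW with h | ⟨X, hX, Y, hY, rfl⟩
    · rcases shape1 b c W h with rfl | ⟨a, ha, rfl⟩
      · exact hz
      · exact hconst a ha
    · rcases shape1 b c X hX with rfl | ⟨a, ha, rfl⟩ <;>
        rcases shape1 b c Y hY with rfl | ⟨a', ha', rfl⟩
      · rw [lieB_self]; exact zero_mem _
      · rw [lieB_Zone_const]; exact neg_mem (Dmem b c a' ha')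
      · rw [lieB_const_Zone]; exact Dmem b c a ha
      · rw [lieB_const_const]; exact zero_mem _
  · refine span_le.2 ?_
    rintro _ ⟨i, rfl⟩
    fin_cases i
    · have h := mem_fiber (memXf b c le_rfl); rw [Xf0] at h; exact h
    · show e 3 ∈ bigFiber b c 2
      rw [e3_comb b c]
      exact sub_mem (sub_mem (mem_fiber (memZ1 b c 2))
        (smul_mem _ b (mem_fiber (memE5 b c (by norm_num)))))
        (smul_mem _ c (mem_fiber (memE6 b c (by norm_num))))
    · exact mem_fiber (memE4 b c le_rfl)
    · exact mem_fiber (memE5 b c (by norm_num))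
    · exact mem_fiber (memE6 b c (by norm_num))
    · exact mem_fiber (memZ2 b c 2)
    · exact mem_fiber (memZ3 b c 2)

lemma fiber3_top (b c : ℝ) : bigFiber b c 3 = ⊤ := by
  rw [eq_top_iff, ← (Pi.basisFun ℝ (Fin 9)).span_eq]
  refine span_le.2 ?_
  rintro _ ⟨i, rfl⟩
  have hb : (Pi.basisFun ℝ (Fin 9)) i = e i := by simp [e]
  rw [hb]
  have f23 : bigFiber b c 2 ≤ bigFiber b c 3 :=
    span_mono (Set.image_mono (BigSet_mono b c 2))
  fin_cases i
  · exact f23 (by rw [fiber2_eq]; exact subset_span ⟨0, rfl⟩)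
  · have h := mem_fiber (memB1 b c); rw [val_e1] at h; exact h
  · have h := mem_fiber (memB2 b c); rw [val_e2] at h; exact h
  · exact f23 (by rw [fiber2_eq]; exact subset_span ⟨1, rfl⟩)
  · exact f23 (by rw [fiber2_eq]; exact subset_span ⟨2, rfl⟩)
  · exact f23 (by rw [fiber2_eq]; exact subset_span ⟨3, rfl⟩)
  · exact f23 (by rw [fiber2_eq]; exact subset_span ⟨4, rfl⟩)
  · exact f23 (by rw [fiber2_eq]; exact subset_span ⟨5, rfl⟩)
  · exact f23 (by rw [fiber2_eq]; exact subset_span ⟨6, rfl⟩)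


/-- For `(b,c) ≠ (0,0)`, the big growth vector at the origin of the
distribution spanned by Z₁, ∂_{x₄}, ∂_{y₄} is [3, 5, 7, 9]. -/
theorem big_growth_vector_121 (b c : ℝ) (hbc : (b, c) ≠ (0, 0)) :
    Module.finrank ℝ (bigFiber b c 0) = 3 ∧
    Module.finrank ℝ (bigFiber b c 1) = 5 ∧
    Module.finrank ℝ (bigFiber b c 2) = 7 ∧
    Module.finrank ℝ (bigFiber b c 3) = 9 := by
  refine ⟨?_, ?_, ?_, ?_⟩
  · rw [fiber0_eq, finrank_span_eq_card (indep_fam0 b c)]; simp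
  · rw [fiber1_eq, finrank_span_eq_card indep_fam1]; simp
  · rw [fiber2_eq, finrank_span_eq_card indep_fam2]; simp
  · rw [fiber3_top, finrank_top]; simp
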